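/- The Nuij sequence (1, 0, …, 0) admits a universal determinantal representation: for any reals λ₁,…,λ_d, letting D = diag(λ₁,…,λ_d), J the all-ones d×d matrix, and p(z) = ∏(z+λ_i), one has det(zI + D + sJ) = p(z) + s·p'(z). -/

import Mathlib

open Polynomial

lemma det_diag_add_smul_ones {K : Type*} [Field K] {d : ℕ} (a : Fin d → K) (s : K)
    (ha : ∀ i, a i ≠ 0) :
    Matrix.det (Matrix.diagonal a + s • Matrix.of (fun _ _ : Fin d => (1 : K)))
      = ∏ i, a i + s * ∑ i, ∏ j ∈ Finset.univ.erase i, a j := by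
  have hJ : s • Matrix.of (fun _ _ : Fin d => (1 : K))
      = Matrix.replicateCol Unit (fun _ => s) * Matrix.replicateRow Unit (fun _ => (1 : K)) := by
    ext i j
    simp [Matrix.mul_apply]
  have hdet : IsUnit (Matrix.diagonal a).det := by
    rw [Matrix.det_diagonal]
    exact (Finset.prod_ne_zero_iff.mpr (fun i _ => ha i)).isUnit
  have hinv : (Matrix.diagonal a)⁻¹ = Matrix.diagonal (fun i => (a i)⁻¹) := by
    apply Matrix.inv_eq_right_inv
    rw [Matrix.diagonal_mul_diagonal]
    simp [mul_inv_cancel₀, ha, Matrix.diagonal_one]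
  rw [hJ, Matrix.det_add_replicateCol_mul_replicateRow hdet, Matrix.det_diagonal, hinv, Matrix.det_unique]
  simp only [Matrix.add_apply, Matrix.one_apply_eq, Matrix.mul_apply, Matrix.replicateRow_apply,
    Matrix.replicateCol_apply, Matrix.diagonal_apply, Finset.sum_ite_eq, Finset.sum_ite_eq', Finset.mem_univ, if_true]
  simp only [one_mul, Finset.univ_unique, Finset.sum_singleton]
  rw [mul_add, mul_one, Finset.mul_sum, Finset.mul_sum]
  congr 1
  refine Finset.sum_congr rfl fun x _ => ?_
  rw [Finset.sum_ite_eq' Finset.univ x (fun i => (a i)⁻¹)]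
  simp only [Finset.mem_univ, if_true, mul_inv_cancel₀ (ha x), one_mul]
  rw [← Finset.mul_prod_erase Finset.univ a (Finset.mem_univ x), mul_comm (a x),
    mul_assoc, ← mul_assoc (a x), mul_inv_cancel₀ (ha x), one_mul, mul_comm]

lemma derivative_finset_prod {ι : Type*} [DecidableEq ι] (t : Finset ι) (f : ι → Polynomial ℝ) :
    Polynomial.derivative (∏ i ∈ t, f i)
      = ∑ i ∈ t, (∏ j ∈ t.erase i, f j) * Polynomial.derivative (f i) := by
  induction t using Finset.induction_on with
  | empty => simp
  | @insert a t ha ih =>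
    rw [Finset.prod_insert ha, Polynomial.derivative_mul, Finset.sum_insert ha,
      Finset.erase_insert ha, ih, Finset.mul_sum, mul_comm (Polynomial.derivative (f a))]
    congr 1
    refine Finset.sum_congr rfl fun i hi => ?_
    rw [Finset.erase_insert_of_ne (Ne.symm fun h : i = a => ha (h ▸ hi)),
      Finset.prod_insert (fun h => ha (Finset.mem_of_mem_erase h)), mul_assoc]

theorem det_all_ones_pencil (d : ℕ) (lam : Fin d → ℝ) (z s : ℝ) :
    Matrix.det (z • (1 : Matrix (Fin d) (Fin d) ℝ) + Matrix.diagonal lam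
        + s • Matrix.of (fun _ _ : Fin d => (1 : ℝ)))
      = Polynomial.eval z
          ((∏ i, (X + Polynomial.C (lam i)))
            + s • Polynomial.derivative (∏ i, (X + Polynomial.C (lam i)))) := by
  set P : ℝ[X] := ∏ i, (X + Polynomial.C (lam i)) with hP
  set Q : ℝ[X] := ∑ i, ∏ j ∈ Finset.univ.erase i, (X + Polynomial.C (lam j)) with hQ
  set N : Matrix (Fin d) (Fin d) ℝ[X] :=
    Matrix.diagonal (fun i => X + Polynomial.C (lam i))
      + Polynomial.C s • Matrix.of (fun _ _ : Fin d => (1 : ℝ[X])) with hN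
  -- Step A : N.det = P + C s * Q
  have hdetN : N.det = P + Polynomial.C s * Q := by
    set K := FractionRing ℝ[X]
    set φ : ℝ[X] →+* K := algebraMap ℝ[X] K with hφ
    have hφinj : Function.Injective φ := IsFractionRing.injective ℝ[X] K
    apply hφinj
    have hmap : N.map φ = Matrix.diagonal (fun i => φ (X + Polynomial.C (lam i)))
        + φ (Polynomial.C s) • Matrix.of (fun _ _ : Fin d => (1 : K)) := by
      ext i j
      by_cases h : i = j <;>
        simp [hN, Matrix.diagonal_apply, h, map_add, _root_.map_mul, mul_comm]
    have hne : ∀ i, φ (X + Polynomial.C (lam i)) ≠ 0 := by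
      intro i h
      exact (Polynomial.monic_X_add_C (lam i)).ne_zero (hφinj (by simpa using h))
    rw [φ.map_det, RingHom.mapMatrix_apply, hmap, det_diag_add_smul_ones _ _ hne, map_add, _root_.map_mul, map_prod, map_sum]
    congr 1
    congr 1
    refine Finset.sum_congr rfl fun i _ => (map_prod φ _ _).symm
  -- Step B : the real matrix is `N.map (eval z)`
  have hmat : (z • (1 : Matrix (Fin d) (Fin d) ℝ) + Matrix.diagonal lam
      + s • Matrix.of (fun _ _ : Fin d => (1 : ℝ)))
      = N.map (Polynomial.evalRingHom z) := by
    ext i j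
    by_cases h : i = j <;>
      simp [hN, Matrix.diagonal_apply, Matrix.one_apply, h]
  -- Step C : derivative of the product
  have hQ' : Polynomial.derivative P = Q := by
    rw [hP, hQ, derivative_finset_prod]
    refine Finset.sum_congr rfl fun i _ => ?_
    simp
  rw [hmat, ← RingHom.mapMatrix_apply, ← RingHom.map_det, hdetN, hQ',
    Polynomial.smul_eq_C_mul]
  simp [Polynomial.coe_evalRingHom]
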